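/- Let (G^i)_{i<ω} be a sequence of non-archimedean CLI Polish groups with 𝒢^i = (G^i_n) ∈ dgnb(G^i) for each i < ω. Let G = ∏_i G^i with the product topology, and for each n < ω let G_n = ∏_{i<n} G^i_n × ∏_{i≥n} G^i. Then 𝒢 = (G_n) ∈ dgnb(G), and for every k < ω, ρ^k(𝒢) ≤ max{ρ^k(𝒢^i) : i < k} + k. -/

import Mathlib

noncomputable section

/-- `omegaPart a` is ω(a): the largest limit ordinal `≤ a`, or `0` if there is none. -/
def omegaPart (a : Ordinal) : Ordinal :=
  sSup {b : Ordinal | (b = 0 ∨ Order.IsSuccLimit b) ∧ b ≤ a}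

/-- `IsTree lt` says that the binary relation `lt` on `T` is a tree order: it is irreflexive,
transitive, and the set of predecessors of any node is finite and linearly ordered. -/
def IsTree {T : Type*} (lt : T → T → Prop) : Prop :=
  (∀ s, ¬ lt s s) ∧
  (∀ s t u, lt s t → lt t u → lt s u) ∧
  (∀ s, {t | lt t s}.Finite) ∧
  (∀ s t u, lt t s → lt u s → t = u ∨ lt t u ∨ lt u t)

/-- The length `lh s` of a node of a tree: the number of its strict predecessors. -/
def lh {T : Type*} (lt : T → T → Prop) (s : T) : ℕ :=
  Nat.card {t | lt t s}

/-- The rank `ρ(T)` of a tree `(T, lt)`: for a well-founded tree it is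
`sup { ρ_T(s) + 1 : s ∈ T }` where `ρ_T(s) = sup { ρ_T(t) + 1 : s < t }`;
for an ill-founded tree we use the junk value `0`. -/
def rhoRel {T : Type u} (lt : T → T → Prop) : Ordinal.{u} :=
  letI := Classical.dec (WellFounded (Function.swap lt))
  if h : WellFounded (Function.swap lt) then ⨆ s : T, Order.succ ((h.apply s).rank) else 0

/-- The nodes of the tree `T_ℰ^X` associated to a sequence `E` of (equivalence) relations
on `X`: pairs `(n, C)` where `C` is a non-singleton class `[x]_{E n}`. -/
def TreeNode (X : Type u) (E : ℕ → X → X → Prop) : Type u :=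
  {p : ℕ × Set X // ∃ x : X, p.2 = {y | E p.1 x y} ∧ p.2 ≠ {x}}

/-- The tree order on `T_ℰ^X`: `(n, C) < (m, D)` iff `n < m` and `C ⊇ D`. -/
def nodeLT {X : Type u} (E : ℕ → X → X → Prop) :
    TreeNode X E → TreeNode X E → Prop :=
  fun s t => s.1.1 < t.1.1 ∧ t.1.2 ⊆ s.1.2

/-- The tree `T_ℰ^X` is well-founded: no infinite strictly increasing sequence. -/
def TreeWF (X : Type u) (E : ℕ → X → X → Prop) : Prop :=
  WellFounded (Function.swap (nodeLT E))

/-- The rank `ρ(T_ℰ^X)`. -/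
def treeRho (X : Type u) (E : ℕ → X → X → Prop) : Ordinal.{u} :=
  rhoRel (nodeLT E)

/-- A Polish group: a topological group whose topology is Polish. -/
def IsPolishGroup (G : Type u) [Group G] [TopologicalSpace G] : Prop :=
  IsTopologicalGroup G ∧ PolishSpace G

/-- A topological group is non-archimedean if the open subgroups form a
neighborhood base of the identity. -/
def IsNonArch (G : Type u) [Group G] [TopologicalSpace G] : Prop :=
  ∀ U ∈ nhds (1 : G), ∃ H : Subgroup G, IsOpen (H : Set G) ∧ (H : Set G) ⊆ U

/-- A topological group is CLI if it admits a compatible complete left-invariant metric. -/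
def IsCLI (G : Type u) [Group G] [TopologicalSpace G] : Prop :=
  ∃ m : MetricSpace G,
    m.toUniformSpace.toTopologicalSpace = ‹TopologicalSpace G› ∧
    @CompleteSpace G m.toUniformSpace ∧
    ∀ g h k : G, m.dist (g * h) (g * k) = m.dist h k

/-- A topological group is TSI if it admits a compatible complete two-sided-invariant metric. -/
def IsTSI (G : Type u) [Group G] [TopologicalSpace G] : Prop :=
  ∃ m : MetricSpace G,
    m.toUniformSpace.toTopologicalSpace = ‹TopologicalSpace G› ∧
    @CompleteSpace G m.toUniformSpace ∧
    ∀ g h k : G, m.dist (g * h) (g * k) = m.dist h k ∧ m.dist (h * g) (k * g) = m.dist h k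

/-- `Dgnb G` is the set `dgnb(G)`: decreasing sequences `(G_n)` of open subgroups of `G`
with `G_0 = G` forming a neighborhood base of `1_G`. -/
structure Dgnb (G : Type u) [Group G] [TopologicalSpace G] where
  seq : ℕ → Subgroup G
  isOpen : ∀ n, IsOpen ((seq n : Set G))
  antitone : ∀ n, seq (n + 1) ≤ seq n
  zero_eq_top : seq 0 = ⊤
  basis : ∀ U ∈ nhds (1 : G), ∃ n, ((seq n : Set G)) ⊆ U

/-- The orbit equivalence relation of (the action of) a subgroup `H ≤ G` on a `G`-space `X`:
`x ∼ y` iff `g • x = y` for some `g ∈ H`. -/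
def subOrbit {G : Type u} [Group G] (H : Subgroup G) (X : Type v) [MulAction G X] :
    X → X → Prop :=
  fun x y => ∃ g ∈ H, g • x = y

/-- The tree `T_𝒢^X` of a `𝒢 ∈ dgnb(G)` and a `G`-space `X`: nodes are pairs `(n, C)`
with `C` a non-singleton `G_n`-orbit. We record it by its defining sequence of relations. -/
def dgnbRel {G : Type u} [Group G] [TopologicalSpace G] (𝒢 : Dgnb G) (X : Type v)
    [MulAction G X] : ℕ → X → X → Prop :=
  fun n => subOrbit (𝒢.seq n) X

/-- `ρ^k(𝒢) = ρ(T_𝒢^{G/G_k})`, where `G` acts by left translation on `G/G_k`. -/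
def rhoK {G : Type u} [Group G] [TopologicalSpace G] (𝒢 : Dgnb G) (k : ℕ) : Ordinal.{u} :=
  treeRho (G ⧸ 𝒢.seq k) (dgnbRel 𝒢 (G ⧸ 𝒢.seq k))

/-- `ρ(𝒢) = ρ(T_𝒢^{X(𝒢)})` where `X(𝒢) = ⊔_k G/G_k` is the disjoint union of the coset
spaces, with `G` acting by left translation on each summand. -/
def rhoDgnb {G : Type u} [Group G] [TopologicalSpace G] (𝒢 : Dgnb G) : Ordinal.{u} :=
  treeRho (Σ k : ℕ, G ⧸ 𝒢.seq k)
    (fun n p q => ∃ g ∈ 𝒢.seq n, q = ⟨p.1, g • p.2⟩)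

/-- `G` is α-CLI if `ρ(𝒢) ≤ ω·α` for any (equivalently, some) `𝒢 ∈ dgnb(G)`. -/
def IsAlphaCLI (G : Type u) [Group G] [TopologicalSpace G] (α : Ordinal.{u}) : Prop :=
  ∀ 𝒢 : Dgnb G, rhoDgnb 𝒢 ≤ Ordinal.omega0 * α

/-- `G` is L-α-CLI if `rank(G) ≤ α`, i.e. `ω(ρ(𝒢)) ≤ ω·α` for any (equivalently, some)
`𝒢 ∈ dgnb(G)`. -/
def IsLAlphaCLI (G : Type u) [Group G] [TopologicalSpace G] (α : Ordinal.{u}) : Prop :=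
  ∀ 𝒢 : Dgnb G, omegaPart (rhoDgnb 𝒢) ≤ Ordinal.omega0 * α


section AuxLemmas

private lemma no_descending {α : Sort*} {r : α → α → Prop} (W : WellFounded r)
    (f : ℕ → α) (hf : ∀ n, r (f (n + 1)) (f n)) : False := by
  have H : ∀ x, Acc r x → ∀ n, f n = x → False := by
    intro x hx
    induction hx with
    | intro x _ ih =>
      intro n hn
      exact ih (f (n + 1)) (hn ▸ hf n) (n + 1) rfl
  exact H (f 0) (W.apply _) 0 rfl

private lemma exists_desc {α : Sort*} {r : α → α → Prop} (h : ¬ WellFounded r) :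
    ∃ f : ℕ → α, ∀ n, r (f (n + 1)) (f n) := by
  classical
  have h1 : ∃ x, ¬ Acc r x := by
    by_contra hc; push_neg at hc; exact h ⟨hc⟩
  have h2 : ∀ x, ¬ Acc r x → ∃ y, r y x ∧ ¬ Acc r y := by
    intro x hx
    by_contra hc; push_neg at hc
    exact hx (Acc.intro x fun y hy => hc y hy)
  choose! g hg1 hg2 using h2
  obtain ⟨x0, hx0⟩ := h1
  let F : ℕ → {x // ¬ Acc r x} := fun n =>
    Nat.rec ⟨x0, hx0⟩ (fun _ p => ⟨g p.1, hg2 p.1 p.2⟩) n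
  exact ⟨fun n => (F n).1, fun n => hg1 _ (F n).2⟩

private lemma rank_le_of_dec {α : Type*} {lt : α → α → Prop} (f : α → Ordinal)
    (hf : ∀ s t, lt s t → f t < f s) :
    ∃ W : WellFounded (Function.swap lt), ∀ s, (W.apply s).rank ≤ f s := by
  have W : WellFounded (Function.swap lt) :=
    Subrelation.wf (fun {a b} h => hf b a h) (InvImage.wf f Ordinal.lt_wf)
  refine ⟨W, fun s => ?_⟩
  refine W.induction (C := fun s => (W.apply s).rank ≤ f s) s ?_
  intro x ih
  rw [(W.apply x).rank_eq]
  apply Ordinal.iSup_le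
  rintro ⟨t, ht⟩
  rw [Order.succ_le_iff]
  exact lt_of_le_of_lt (ih t ht) (hf x t ht)

private lemma rhoRel_le_of_wf {α : Type u} {lt : α → α → Prop}
    (W : WellFounded (Function.swap lt)) {a : Ordinal.{u}}
    (h : ∀ s, Order.succ ((W.apply s).rank) ≤ a) : rhoRel lt ≤ a := by
  unfold rhoRel
  rw [dif_pos W]
  exact Ordinal.iSup_le h

private lemma rhoRel_eq_zero {α : Type u} {lt : α → α → Prop}
    (h : ¬ WellFounded (Function.swap lt)) : rhoRel lt = 0 := by
  unfold rhoRel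
  rw [dif_neg h]

private lemma rhoRel_eq_of_wf {α : Type u} {lt : α → α → Prop}
    (W : WellFounded (Function.swap lt)) :
    rhoRel lt = ⨆ s : α, Order.succ ((W.apply s).rank) := by
  unfold rhoRel
  rw [dif_pos W]

section SubOrbit

variable {H : Type*} [Group H] {Y : Type*} [MulAction H Y]

private lemma subOrbit_self (S : Subgroup H) (x : Y) : subOrbit S Y x x :=
  ⟨1, S.one_mem, one_smul _ _⟩

private lemma subOrbit_symm {S : Subgroup H} {x y : Y} :
    subOrbit S Y x y → subOrbit S Y y x := by
  rintro ⟨g, hg, rfl⟩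
  exact ⟨g⁻¹, S.inv_mem hg, inv_smul_smul g x⟩

private lemma subOrbit_trans {S : Subgroup H} {x y z : Y} :
    subOrbit S Y x y → subOrbit S Y y z → subOrbit S Y x z := by
  rintro ⟨g, hg, rfl⟩ ⟨g', hg', rfl⟩
  exact ⟨g' * g, S.mul_mem hg' hg, (mul_smul g' g x).symm ▸ rfl⟩

private lemma subOrbit_class_eq {S : Subgroup H} {x z : Y} (h : subOrbit S Y x z) :
    {y | subOrbit S Y z y} = {y | subOrbit S Y x y} :=
  Set.ext fun y => ⟨fun hy => subOrbit_trans h hy, fun hy => subOrbit_trans (subOrbit_symm h) hy⟩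

private lemma subOrbit_mono {S S' : Subgroup H} (hss : S ≤ S') {x y : Y} :
    subOrbit S Y x y → subOrbit S' Y x y := by
  rintro ⟨g, hg, rfl⟩
  exact ⟨g, hss hg, rfl⟩

end SubOrbit

private lemma Dgnb_seq_le {H : Type*} [Group H] [TopologicalSpace H] (𝒢 : Dgnb H)
    {m n : ℕ} (h : m ≤ n) : 𝒢.seq n ≤ 𝒢.seq m := by
  induction n, h using Nat.le_induction with
  | base => exact le_rfl
  | succ n hmn ih => exact (𝒢.antitone n).trans ih

private lemma node_nontrivial' {H : Type*} [Group H] [TopologicalSpace H] (𝒦 : Dgnb H)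
    {Y : Type*} [MulAction H Y] (s : TreeNode Y (dgnbRel 𝒦 Y)) : s.1.2.Nontrivial := by
  obtain ⟨x, hC, hne⟩ := s.2
  have hx : x ∈ s.1.2 := by rw [hC]; exact subOrbit_self _ x
  by_contra hcon
  rw [Set.not_nontrivial_iff] at hcon
  exact hne (hcon.eq_singleton_of_mem hx)

private theorem aux_rhoK {G : ℕ → Type} [∀ i, Group (G i)] [∀ i, TopologicalSpace (G i)]
    (𝒢 : ∀ i, Dgnb (G i)) (𝒦 : Dgnb (∀ i, G i))
    (hK : ∀ (n : ℕ) (g : ∀ i, G i), g ∈ 𝒦.seq n ↔ ∀ i, i < n → g i ∈ (𝒢 i).seq n)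
    (k : ℕ) :
    rhoK 𝒦 k ≤ (⨆ i : Fin k, rhoK (𝒢 i) k) + k := by
  classical
  rcases Nat.eq_zero_or_pos k with hk0 | hk
  · -- k = 0 : the coset space is a single point, so the tree is empty
    subst hk0
    haveI hsub : Subsingleton ((∀ i, G i) ⧸ 𝒦.seq 0) := by
      have h := 𝒦.zero_eq_top
      rw [h]
      exact QuotientGroup.subsingleton_quotient_top
    haveI : IsEmpty (TreeNode ((∀ i, G i) ⧸ 𝒦.seq 0)
        (dgnbRel 𝒦 ((∀ i, G i) ⧸ 𝒦.seq 0))) := by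
      constructor
      intro s
      obtain ⟨x, hC, hne⟩ := s.2
      have hx : x ∈ s.1.2 := by rw [hC]; exact subOrbit_self _ x
      exact hne ((Set.subsingleton_of_subsingleton).eq_singleton_of_mem hx)
    have W : WellFounded (Function.swap (nodeLT
        (dgnbRel 𝒦 ((∀ i, G i) ⧸ 𝒦.seq 0)))) := ⟨fun a => isEmptyElim a⟩
    exact rhoRel_le_of_wf W (fun s => isEmptyElim s)
  · -- k > 0
    haveI : Nonempty (Fin k) := ⟨⟨0, hk⟩⟩
    -- the projections to the coordinate coset spaces
    let π : ∀ i : Fin k, ((∀ l, G l) ⧸ 𝒦.seq k) → (G i ⧸ (𝒢 i).seq k) := fun i =>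
      Quotient.map' (fun g => g (i : ℕ)) (fun a b hab => by
        rw [QuotientGroup.leftRel_apply] at hab ⊢
        exact (hK k _).1 hab i i.isLt)
    have hπs : ∀ (i : Fin k) (g : ∀ l, G l) (x : (∀ l, G l) ⧸ 𝒦.seq k),
        π i (g • x) = g (i : ℕ) • π i x := by
      intro i g x
      refine Quotient.inductionOn' x (fun a => ?_)
      rfl
    have hπmk : ∀ (i : Fin k) (g : ∀ l, G l),
        π i (QuotientGroup.mk g) = QuotientGroup.mk (g (i : ℕ)) := fun i g => rfl
    have hπinj : ∀ x y : (∀ l, G l) ⧸ 𝒦.seq k, (∀ i : Fin k, π i x = π i y) → x = y := by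
      intro x y
      refine Quotient.inductionOn₂' x y (fun a b h => ?_)
      rw [Quotient.eq'']
      rw [QuotientGroup.leftRel_apply]
      rw [hK]
      intro i hi
      have h2 : (Quotient.mk'' (a i) : G i ⧸ (𝒢 i).seq k) = Quotient.mk'' (b i) :=
        h ⟨i, hi⟩
      rw [Quotient.eq''] at h2
      rw [QuotientGroup.leftRel_apply] at h2
      exact h2
    -- the image of an orbit class under a projection (for n ≥ k)
    have hπimg : ∀ (i : Fin k) (n : ℕ), k ≤ n → ∀ x : (∀ l, G l) ⧸ 𝒦.seq k,
        π i '' {y | dgnbRel 𝒦 ((∀ l, G l) ⧸ 𝒦.seq k) n x y}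
          = {y | dgnbRel (𝒢 i) (G i ⧸ (𝒢 i).seq k) n (π i x) y} := by
      intro i n hkn x
      ext z
      constructor
      · rintro ⟨y, ⟨g, hg, rfl⟩, rfl⟩
        exact ⟨g (i : ℕ), (hK n g).1 hg i (lt_of_lt_of_le i.isLt hkn), (hπs i g x).symm⟩
      · rintro ⟨h, hh, rfl⟩
        refine ⟨Pi.mulSingle (i : ℕ) h • x, ⟨Pi.mulSingle (i : ℕ) h, ?_, rfl⟩, ?_⟩
        · rw [hK]
          intro j hj
          by_cases hji : j = (i : ℕ)
          · subst hji
            rw [Pi.mulSingle_eq_same]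
            exact hh
          · rw [Pi.mulSingle_eq_of_ne hji]
            exact one_mem _
        · rw [hπs, Pi.mulSingle_eq_same]
    -- every node has a coordinate with non-singleton projected orbit
    have hJ : ∀ s : TreeNode ((∀ l, G l) ⧸ 𝒦.seq k)
        (dgnbRel 𝒦 ((∀ l, G l) ⧸ 𝒦.seq k)),
        ∃ i : Fin k, (π i '' s.1.2).Nontrivial := by
      intro s
      obtain ⟨x, hx, y, hy, hxy⟩ := node_nontrivial' 𝒦 s
      by_contra hc
      push_neg at hc
      refine hxy (hπinj x y (fun i => ?_))
      have hsub := hc i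
      exact hsub (Set.mem_image_of_mem _ hx) (Set.mem_image_of_mem _ hy)
    -- witness that the projected orbit is a genuine node of the coordinate tree
    have hwit : ∀ (s : TreeNode ((∀ l, G l) ⧸ 𝒦.seq k)
        (dgnbRel 𝒦 ((∀ l, G l) ⧸ 𝒦.seq k))) (i : Fin k), k ≤ s.1.1 →
        (π i '' s.1.2).Nontrivial →
        ∃ x0 : G i ⧸ (𝒢 i).seq k,
          π i '' s.1.2 = {y | dgnbRel (𝒢 i) (G i ⧸ (𝒢 i).seq k) s.1.1 x0 y} ∧
          π i '' s.1.2 ≠ {x0} := by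
      intro s i hkn hnt
      obtain ⟨x, hC, -⟩ := s.2
      refine ⟨π i x, by rw [hC]; exact hπimg i s.1.1 hkn x,
        fun he => Set.not_nontrivial_singleton (he ▸ hnt)⟩
    -- membership of mulSingle in the product subgroups
    have hms : ∀ (i : Fin k) (m : ℕ) (h : G i), h ∈ (𝒢 i).seq m →
        Pi.mulSingle (i : ℕ) h ∈ 𝒦.seq m := by
      intro i m h hh
      rw [hK]
      intro j hj
      by_cases hji : j = (i : ℕ)
      · subst hji
        rw [Pi.mulSingle_eq_same]
        exact hh
      · rw [Pi.mulSingle_eq_of_ne hji]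
        exact one_mem _
    by_cases hwf : ∀ i : Fin k, WellFounded (Function.swap
        (nodeLT (dgnbRel (𝒢 i) (G i ⧸ (𝒢 i).seq k))))
    · -- all coordinate trees are well-founded: rank bound via a decreasing ordinal map
      set ρ := ⨆ i : Fin k, rhoK (𝒢 i) k with hρ
      have hrank_lt_ρ : ∀ (i : Fin k)
          (t : TreeNode (G i ⧸ (𝒢 i).seq k) (dgnbRel (𝒢 i) (G i ⧸ (𝒢 i).seq k))),
          ((hwf i).apply t).rank < ρ := by
        intro i t
        have h1 : Order.succ (((hwf i).apply t).rank) ≤ rhoK (𝒢 i) k := by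
          have h2 : rhoK (𝒢 i) k = ⨆ s, Order.succ (((hwf i).apply s).rank) :=
            rhoRel_eq_of_wf (hwf i)
          rw [h2]
          exact Ordinal.le_iSup _ t
        exact lt_of_lt_of_le (Order.lt_succ _)
          (h1.trans (Ordinal.le_iSup (fun i : Fin k => rhoK (𝒢 i) k) i))
      -- the decreasing ordinal map
      let f : TreeNode ((∀ l, G l) ⧸ 𝒦.seq k)
          (dgnbRel 𝒦 ((∀ l, G l) ⧸ 𝒦.seq k)) → Ordinal := fun s =>
        if hn : k ≤ s.1.1 then
          Finset.univ.sup' Finset.univ_nonempty (fun i : Fin k =>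
            if h : (π i '' s.1.2).Nontrivial then
              ((hwf i).apply ⟨(s.1.1, π i '' s.1.2), hwit s i hn h⟩).rank else 0)
        else ρ + ((k - 1 - s.1.1 : ℕ) : Ordinal)
      have hfpos : ∀ s (hn : k ≤ s.1.1), f s =
          Finset.univ.sup' Finset.univ_nonempty (fun i : Fin k =>
            if h : (π i '' s.1.2).Nontrivial then
              ((hwf i).apply ⟨(s.1.1, π i '' s.1.2), hwit s i hn h⟩).rank else 0) :=
        fun s hn => dif_pos hn
      have hfneg : ∀ s (hn : ¬ k ≤ s.1.1), f s = ρ + ((k - 1 - s.1.1 : ℕ) : Ordinal) :=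
        fun s hn => dif_neg hn
      have hflt : ∀ s (hn : k ≤ s.1.1), f s < ρ := by
        intro s hn
        rw [hfpos s hn]
        rw [Finset.sup'_lt_iff]
        intro i _
        by_cases hi : (π i '' s.1.2).Nontrivial
        · rw [dif_pos hi]
          exact hrank_lt_ρ i _
        · rw [dif_neg hi]
          obtain ⟨i0, hi0⟩ := hJ s
          exact lt_of_le_of_lt zero_le
            (hrank_lt_ρ i0 ⟨(s.1.1, π i0 '' s.1.2), hwit s i0 hn hi0⟩)
      have fdec : ∀ s t, nodeLT (dgnbRel 𝒦 ((∀ l, G l) ⧸ 𝒦.seq k)) s t → f t < f s := by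
        rintro s t ⟨hlt, hsub⟩
        by_cases hm : k ≤ t.1.1
        · by_cases hn : k ≤ s.1.1
          · rw [hfpos t hm]
            rw [Finset.sup'_lt_iff]
            intro i _
            by_cases hi : (π i '' t.1.2).Nontrivial
            · rw [dif_pos hi]
              have hi' : (π i '' s.1.2).Nontrivial := hi.mono (Set.image_mono hsub)
              have hnode : nodeLT (dgnbRel (𝒢 i) (G i ⧸ (𝒢 i).seq k))
                  ⟨(s.1.1, π i '' s.1.2), hwit s i hn hi'⟩
                  ⟨(t.1.1, π i '' t.1.2), hwit t i hm hi⟩ :=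
                ⟨hlt, Set.image_mono hsub⟩
              have h2 := ((hwf i).apply _).rank_lt_of_rel hnode
              refine lt_of_lt_of_le h2 ?_
              rw [hfpos s hn]
              have h4 : (if h : (π i '' s.1.2).Nontrivial then
                  ((hwf i).apply ⟨(s.1.1, π i '' s.1.2), hwit s i hn h⟩).rank else 0)
                  = ((hwf i).apply ⟨(s.1.1, π i '' s.1.2), hwit s i hn hi'⟩).rank := dif_pos hi'
              exact le_trans (le_of_eq h4.symm) (Finset.le_sup'
                (fun i' : Fin k => if h : (π i' '' s.1.2).Nontrivial then
                  ((hwf i').apply ⟨(s.1.1, π i' '' s.1.2), hwit s i' hn h⟩).rank else 0)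
                (Finset.mem_univ i))
            · rw [dif_neg hi]
              obtain ⟨i0, hi0⟩ := hJ t
              have hi0' : (π i0 '' s.1.2).Nontrivial := hi0.mono (Set.image_mono hsub)
              have hnode : nodeLT (dgnbRel (𝒢 i0) (G i0 ⧸ (𝒢 i0).seq k))
                  ⟨(s.1.1, π i0 '' s.1.2), hwit s i0 hn hi0'⟩
                  ⟨(t.1.1, π i0 '' t.1.2), hwit t i0 hm hi0⟩ :=
                ⟨hlt, Set.image_mono hsub⟩
              have h2 := ((hwf i0).apply _).rank_lt_of_rel hnode
              have h3 : (0 : Ordinal) < ((hwf i0).apply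
                  ⟨(s.1.1, π i0 '' s.1.2), hwit s i0 hn hi0'⟩).rank :=
                lt_of_le_of_lt zero_le h2
              refine lt_of_lt_of_le h3 ?_
              rw [hfpos s hn]
              have h4 : (if h : (π i0 '' s.1.2).Nontrivial then
                  ((hwf i0).apply ⟨(s.1.1, π i0 '' s.1.2), hwit s i0 hn h⟩).rank else 0)
                  = ((hwf i0).apply ⟨(s.1.1, π i0 '' s.1.2), hwit s i0 hn hi0'⟩).rank := dif_pos hi0'
              exact le_trans (le_of_eq h4.symm) (Finset.le_sup'
                (fun i' : Fin k => if h : (π i' '' s.1.2).Nontrivial then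
                  ((hwf i').apply ⟨(s.1.1, π i' '' s.1.2), hwit s i' hn h⟩).rank else 0)
                (Finset.mem_univ i0))
          · rw [hfneg s hn]
            refine lt_of_lt_of_le ?_ le_self_add
            exact hflt t hm
        · have hn : ¬ k ≤ s.1.1 := fun h => hm (h.trans (le_of_lt hlt))
          rw [hfneg s hn, hfneg t hm]
          have hcast : ((k - 1 - t.1.1 : ℕ) : Ordinal) < ((k - 1 - s.1.1 : ℕ) : Ordinal) := by
            rw [Nat.cast_lt]
            push_neg at hm hn
            omega
          exact (add_lt_add_iff_left ρ).2 hcast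
      obtain ⟨W, hrankle⟩ := rank_le_of_dec f fdec
      have hmain : rhoK 𝒦 k = ⨆ s, Order.succ ((W.apply s).rank) := rhoRel_eq_of_wf W
      rw [hmain]
      apply Ordinal.iSup_le
      intro s
      rw [Order.succ_le_iff]
      refine lt_of_le_of_lt (hrankle s) ?_
      by_cases hn : k ≤ s.1.1
      · exact lt_of_lt_of_le (hflt s hn) le_self_add
      · rw [hfneg s hn]
        refine (add_lt_add_iff_left ρ).2 ?_
        rw [Nat.cast_lt]
        omega
    · -- some coordinate tree is ill-founded: then so is the product tree
      push_neg at hwf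
      obtain ⟨i, hi⟩ := hwf
      have hnwf : ¬ WellFounded (Function.swap
          (nodeLT (dgnbRel 𝒦 ((∀ l, G l) ⧸ 𝒦.seq k)))) := by
        intro W
        obtain ⟨aseq, ha⟩ := exists_desc hi
        -- extract base points and representatives
        choose y hy1 hy2 using fun j => (aseq j).2
        choose yr hyr using fun j => QuotientGroup.mk_surjective (y j)
        let xseq : ℕ → ((∀ l, G l) ⧸ 𝒦.seq k) := fun j =>
          QuotientGroup.mk (Pi.mulSingle (i : ℕ) (yr j))
        have hπx : ∀ j, π i (xseq j) = y j := by
          intro j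
          have h1 : π i (xseq j) =
              QuotientGroup.mk (Pi.mulSingle (i : ℕ) (yr j) (i : ℕ)) := rfl
          rw [h1, Pi.mulSingle_eq_same, hyr]
        have hrel : ∀ (j j' : ℕ) (h : G i), h • y j = y j' →
            (Pi.mulSingle (i : ℕ) h) • xseq j = xseq j' := by
          intro j j' h hy
          have hq : QuotientGroup.mk (h * yr j) = QuotientGroup.mk (yr j')
              (s := (𝒢 i).seq k) := by
            rw [hyr j']
            rw [← hy, ← hyr j]
            rfl
          rw [QuotientGroup.eq] at hq
          show QuotientGroup.mk (Pi.mulSingle (i : ℕ) h * Pi.mulSingle (i : ℕ) (yr j))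
            = QuotientGroup.mk (Pi.mulSingle (i : ℕ) (yr j'))
          rw [QuotientGroup.eq]
          rw [hK]
          intro l hl
          show ((Pi.mulSingle (i : ℕ) h l * Pi.mulSingle (i : ℕ) (yr j) l)⁻¹
            * Pi.mulSingle (i : ℕ) (yr j') l) ∈ _
          by_cases hli : l = (i : ℕ)
          · subst hli
            rw [Pi.mulSingle_eq_same, Pi.mulSingle_eq_same, Pi.mulSingle_eq_same]
            exact hq
          · rw [Pi.mulSingle_eq_of_ne hli, Pi.mulSingle_eq_of_ne hli,
              Pi.mulSingle_eq_of_ne hli]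
            simpa using one_mem _
        have hyC : ∀ j, y j ∈ (aseq j).1.2 := by
          intro j
          rw [hy1 j]
          exact subOrbit_self _ _
        -- the lifted classes
        have hDne : ∀ j, {z | dgnbRel 𝒦 ((∀ l, G l) ⧸ 𝒦.seq k) (aseq j).1.1 (xseq j) z}
            ≠ {xseq j} := by
          intro j hsingle
          have hex : ∃ y' ∈ (aseq j).1.2, y' ≠ y j := by
            by_contra hc
            push_neg at hc
            exact hy2 j (Set.eq_singleton_iff_unique_mem.2 ⟨hyC j, hc⟩)
          obtain ⟨y', hy', hyne⟩ := hex
          rw [hy1 j] at hy'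
          obtain ⟨h, hh, hhy⟩ := hy'
          have hx' : (Pi.mulSingle (i : ℕ) h) • xseq j
              ∈ {z | dgnbRel 𝒦 ((∀ l, G l) ⧸ 𝒦.seq k) (aseq j).1.1 (xseq j) z} :=
            ⟨Pi.mulSingle (i : ℕ) h, hms i _ h hh, rfl⟩
          rw [hsingle] at hx'
          have heq : (Pi.mulSingle (i : ℕ) h) • xseq j = xseq j := hx'
          have e1 : h • y j = y j := by
            have e0 := congrArg (π i) heq
            rw [hπs, Pi.mulSingle_eq_same, hπx] at e0
            exact e0
          exact hyne (by rw [← hhy, e1])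
        let bseq : ℕ → TreeNode ((∀ l, G l) ⧸ 𝒦.seq k)
            (dgnbRel 𝒦 ((∀ l, G l) ⧸ 𝒦.seq k)) := fun j =>
          ⟨((aseq j).1.1, {z | dgnbRel 𝒦 ((∀ l, G l) ⧸ 𝒦.seq k) (aseq j).1.1 (xseq j) z}),
            xseq j, rfl, hDne j⟩
        refine no_descending W bseq (fun j => ?_)
        refine ⟨(ha j).1, ?_⟩
        intro z hz
        have h1 : y (j + 1) ∈ (aseq j).1.2 := (ha j).2 (hyC (j + 1))
        rw [hy1 j] at h1
        obtain ⟨h, hh, hhy⟩ := h1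
        have h2 : subOrbit (𝒦.seq (aseq j).1.1) ((∀ l, G l) ⧸ 𝒦.seq k)
            (xseq j) (xseq (j + 1)) :=
          ⟨Pi.mulSingle (i : ℕ) h, hms i _ h hh, hrel j (j + 1) h hhy⟩
        exact subOrbit_trans h2
          (subOrbit_mono (Dgnb_seq_le 𝒦 (le_of_lt (ha j).1)) hz)
      have h0 : rhoK 𝒦 k = 0 := rhoRel_eq_zero hnwf
      rw [h0]
      exact zero_le

end AuxLemmas

theorem statement_19 (G : ℕ → Type) [∀ i, Group (G i)] [∀ i, TopologicalSpace (G i)]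
    [∀ i, IsTopologicalGroup (G i)] [∀ i, PolishSpace (G i)]
    (hna : ∀ i, IsNonArch (G i)) (hcli : ∀ i, IsCLI (G i))
    (𝒢 : ∀ i, Dgnb (G i)) :
    ∃ 𝒦 : Dgnb (∀ i, G i),
      (∀ n, 𝒦.seq n = Subgroup.pi (Set.Iio n) (fun i => (𝒢 i).seq n)) ∧
      ∀ k : ℕ, rhoK 𝒦 k ≤ (⨆ i : Fin k, rhoK (𝒢 i) k) + (k : Ordinal) := by
  classical
  refine ⟨⟨fun n => Subgroup.pi (Set.Iio n) (fun i => (𝒢 i).seq n), ?_, ?_, ?_, ?_⟩,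
    fun n => rfl, ?_⟩
  · -- openness
    intro n
    rw [Subgroup.coe_pi]
    exact isOpen_set_pi (Set.finite_Iio n) (fun i _ => (𝒢 i).isOpen n)
  · -- antitone
    intro n g hg
    rw [Subgroup.mem_pi] at hg ⊢
    intro i hi
    exact Dgnb_seq_le (𝒢 i) (Nat.le_succ n)
      (hg i (Set.mem_Iio.2 (lt_trans (Set.mem_Iio.1 hi) (Nat.lt_succ_self n))))
  · -- 𝒦.seq 0 = ⊤
    refine Subgroup.ext fun g => ?_
    simp [Subgroup.mem_pi]
  · -- neighborhood basis
    intro U hU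
    rw [nhds_pi, Filter.mem_pi'] at hU
    obtain ⟨I, V, hV, hVU⟩ := hU
    have hV1 : ∀ i, V i ∈ nhds (1 : G i) := hV
    choose m hm using fun i => (𝒢 i).basis (V i) (hV1 i)
    refine ⟨I.sup (fun i => max (i + 1) (m i)), fun g hg => hVU ?_⟩
    rw [Set.mem_pi]
    intro i hi
    have h0 : max (i + 1) (m i) ≤ I.sup (fun i => max (i + 1) (m i)) :=
      Finset.le_sup (f := fun i => max (i + 1) (m i)) hi
    have h1 : i + 1 ≤ I.sup (fun i => max (i + 1) (m i)) :=
      le_trans (le_max_left _ _) h0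
    have h2 : m i ≤ I.sup (fun i => max (i + 1) (m i)) :=
      le_trans (le_max_right _ _) h0
    have h3 : g i ∈ (𝒢 i).seq (I.sup (fun i => max (i + 1) (m i))) :=
      (Subgroup.mem_pi _).1 hg i (Set.mem_Iio.2 h1)
    exact hm i (Dgnb_seq_le (𝒢 i) h2 h3)
  · -- the rank bound
    intro k
    exact aux_rhoK 𝒢 _ (fun n g => Subgroup.mem_pi _) k

end
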